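/- Let m > 0, ω > 0, σ > 0, ν ≥ 0 and define ⟨a⟩(t) = [Γ(ν+2)/(√(2σ) Γ(ν+3/2))] · √(4σ² sin²(ωt) + m²ω² cos²(ωt)) / (mω). Then for every t ∈ ℝ, ⟨a⟩(t) ≥ (min(2σ, mω)/(mω)) · Γ(ν+2)/(√(2σ) Γ(ν+3/2)) > 0. In particular ⟨a⟩(t) never vanishes, so the closed Hořava–Lifshitz quantum universe is nonsingular: the big-bang singularity a = 0 is excluded and the universe undergoes a periodic bounce. -/

import Mathlib

/-- Nonsingularity of the closed Hořava–Lifshitz quantum universe: the expectation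
value `⟨a⟩(t) = [Γ(ν+2)/(√(2σ)Γ(ν+3/2))] √(4σ² sin²(ωt) + m²ω² cos²(ωt))/(mω)` of the
scale factor is bounded below by the positive constant
`(min(2σ, mω)/(mω)) Γ(ν+2)/(√(2σ)Γ(ν+3/2))`, so it never vanishes: the big-bang
singularity `a = 0` is excluded and the universe undergoes a periodic bounce. -/
theorem closed_universe_nonsingular (m ω σ ν : ℝ)
    (hm : 0 < m) (hω : 0 < ω) (hσ : 0 < σ) (hν : 0 ≤ ν)
    (A : ℝ → ℝ)
    (hA : ∀ t : ℝ, A t = (Real.Gamma (ν + 2) / (Real.sqrt (2*σ) * Real.Gamma (ν + 3/2)))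
        * Real.sqrt (4*σ^2*Real.sin (ω*t)^2 + m^2*ω^2*Real.cos (ω*t)^2) / (m*ω)) :
    (∀ t : ℝ, A t ≥ (min (2*σ) (m*ω) / (m*ω))
        * (Real.Gamma (ν + 2) / (Real.sqrt (2*σ) * Real.Gamma (ν + 3/2)))) ∧
    0 < (min (2*σ) (m*ω) / (m*ω))
        * (Real.Gamma (ν + 2) / (Real.sqrt (2*σ) * Real.Gamma (ν + 3/2))) := by
  have hK : 0 < min (2*σ) (m*ω) := lt_min (by linarith) (by positivity)
  have hG1 : 0 < Real.Gamma (ν + 2) := Real.Gamma_pos_of_pos (by linarith)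
  have hG2 : 0 < Real.Gamma (ν + 3/2) := Real.Gamma_pos_of_pos (by linarith)
  have hs : 0 < Real.sqrt (2*σ) := Real.sqrt_pos.mpr (by linarith)
  have hC : 0 < Real.Gamma (ν + 2) / (Real.sqrt (2*σ) * Real.Gamma (ν + 3/2)) := by positivity
  constructor
  · intro t
    rw [hA t]
    set K := min (2*σ) (m*ω) with hKdef
    set s := Real.sin (ω*t)
    set c := Real.cos (ω*t)
    have hsc : s^2 + c^2 = 1 := Real.sin_sq_add_cos_sq (ω*t)
    have h1 : K ≤ Real.sqrt (4*σ^2*s^2 + m^2*ω^2*c^2) := by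
      have hE : K^2 ≤ 4*σ^2*s^2 + m^2*ω^2*c^2 := by
        have h2 : K ≤ 2*σ := min_le_left _ _
        have h3 : K ≤ m*ω := min_le_right _ _
        have h4 : K^2 ≤ (2*σ)^2 := pow_le_pow_left₀ hK.le h2 2
        have h5 : K^2 ≤ (m*ω)^2 := pow_le_pow_left₀ hK.le h3 2
        nlinarith [mul_le_mul_of_nonneg_right h4 (sq_nonneg s),
          mul_le_mul_of_nonneg_right h5 (sq_nonneg c)]
      calc K = Real.sqrt (K^2) := (Real.sqrt_sq hK.le).symm
        _ ≤ _ := Real.sqrt_le_sqrt hE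
    have hmω : 0 < m*ω := by positivity
    rw [ge_iff_le, div_mul_eq_mul_div, div_le_div_iff₀ hmω hmω]
    nlinarith [mul_le_mul_of_nonneg_left h1 hC.le]
  · positivity
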